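/- Let G be a group, n ≥ 3, and let a, b ∈ End F_n(G). Then a D b (i.e., there exists c ∈ End F_n(G) with a L c and c R b) if and only if rank a = rank b. -/

import Mathlib

/-- An endomorphism of the rank-`n` free left `G`-act `F_n(G) = G × Fin n`
(the formal symbols `g x_i` are the pairs `(g, i)`), where the action is
`h • (g, i) = (h * g, i)` and equivariance says `(h • x) a = h • (x a)`. -/
structure ActEnd (G : Type*) [Group G] (n : ℕ) : Type _ where
  toFun : G × Fin n → G × Fin n
  equivariant : ∀ (h : G) (x : G × Fin n),
    toFun (h * x.1, x.2) = (h * (toFun x).1, (toFun x).2)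

namespace ActEnd

variable {G : Type*} [Group G] {n : ℕ}

/-- Composition is written left-to-right: `x (a * b) = (x a) b`. -/
instance : Monoid (ActEnd G n) where
  mul a b := ⟨fun x => b.toFun (a.toFun x), by
    intro h x
    try dsimp only
    rw [a.equivariant h x, b.equivariant]⟩
  one := ⟨id, fun _ _ => rfl⟩
  mul_assoc _ _ _ := rfl
  one_mul _ := rfl
  mul_one _ := rfl

@[simp] theorem mul_toFun (a b : ActEnd G n) (x : G × Fin n) :
    (a * b).toFun x = b.toFun (a.toFun x) := rfl

theorem ext' {a b : ActEnd G n} (h : a.toFun = b.toFun) : a = b := by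
  cases a; cases b; cases h; rfl

/-- The rank of an endomorphism of `F_n(G)`: the number of indices `j` such
that `G x_j` meets the image. -/
noncomputable def rank (a : ActEnd G n) : ℕ :=
  Nat.card {j : Fin n // ∃ x, (a.toFun x).2 = j}

end ActEnd

/-- The principal left ideal `M a` of `a`. -/
def lIdeal {M : Type*} [Monoid M] (a : M) : Set M := Set.range fun m => m * a

/-- The principal right ideal `a M` of `a`. -/
def rIdeal {M : Type*} [Monoid M] (a : M) : Set M := Set.range fun m => a * m

/-- The `H`-class of `e`: all elements that are both `L`- and `R`-related to `e`. -/
def hClass {M : Type*} [Monoid M] (e : M) : Set M :=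
  {a | lIdeal a = lIdeal e ∧ rIdeal a = rIdeal e}

namespace ActEnd

variable {G : Type*} [Group G] {n : ℕ}

/-- The index map of an endomorphism. -/
def idx (a : ActEnd G n) (i : Fin n) : Fin n := (a.toFun (1, i)).2

/-- The weight map of an endomorphism. -/
def wt (a : ActEnd G n) (i : Fin n) : G := (a.toFun (1, i)).1

theorem toFun_eq (a : ActEnd G n) (x : G × Fin n) :
    a.toFun x = (x.1 * a.wt x.2, a.idx x.2) := by
  have h := a.equivariant x.1 (1, x.2)
  simpa [wt, idx] using h

/-- Build an endomorphism from weight and index data. -/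
def mk' (w : Fin n → G) (σ : Fin n → Fin n) : ActEnd G n :=
  ⟨fun x => (x.1 * w x.2, σ x.2), by intro h x; dsimp only; rw [mul_assoc]⟩

@[simp] theorem mk'_toFun (w : Fin n → G) (σ : Fin n → Fin n) (x : G × Fin n) :
    (mk' w σ).toFun x = (x.1 * w x.2, σ x.2) := rfl

@[simp] theorem idx_mk' (w : Fin n → G) (σ : Fin n → Fin n) : (mk' w σ).idx = σ := rfl

theorem idx_mul (a b : ActEnd G n) (i : Fin n) :
    (a * b).idx i = b.idx (a.idx i) := by
  show ((a * b).toFun (1, i)).2 = b.idx (a.idx i)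
  rw [mul_toFun, toFun_eq b]
  rfl

theorem rank_eq (a : ActEnd G n) :
    a.rank = (Finset.image a.idx Finset.univ).card := by
  classical
  have hs : {j : Fin n | ∃ x, (a.toFun x).2 = j} =
      ↑(Finset.image a.idx Finset.univ) := by
    ext j
    simp only [Set.mem_setOf_eq, Finset.coe_image, Finset.coe_univ, Set.image_univ,
      Set.mem_range]
    constructor
    · rintro ⟨x, rfl⟩; exact ⟨x.2, by rw [toFun_eq]⟩
    · rintro ⟨i, rfl⟩; exact ⟨(1, i), by rw [toFun_eq]⟩
  calc a.rank = Nat.card {j : Fin n | ∃ x, (a.toFun x).2 = j} := rfl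
    _ = (Finset.image a.idx Finset.univ).card := by
        rw [Nat.card_coe_set_eq, hs, Set.ncard_coe_finset]

theorem rank_mul_le_left (m c : ActEnd G n) : (m * c).rank ≤ c.rank := by
  classical
  rw [rank_eq, rank_eq]
  apply Finset.card_le_card
  intro j hj
  simp only [Finset.mem_image, Finset.mem_univ, true_and] at hj ⊢
  obtain ⟨i, rfl⟩ := hj
  exact ⟨m.idx i, (idx_mul m c i).symm⟩

theorem rank_mul_le_right (c m : ActEnd G n) : (c * m).rank ≤ c.rank := by
  classical
  rw [rank_eq, rank_eq]
  have himg : Finset.image (c * m).idx Finset.univ =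
      Finset.image m.idx (Finset.image c.idx Finset.univ) := by
    rw [Finset.image_image]
    exact Finset.image_congr fun i _ => idx_mul c m i
  rw [himg]
  exact Finset.card_image_le

theorem exists_left_factor (a c : ActEnd G n)
    (h : ∀ i, ∃ j, c.idx j = a.idx i) : ∃ m, a = m * c := by
  choose j hj using h
  refine ⟨mk' (fun i => a.wt i * (c.wt (j i))⁻¹) j, ?_⟩
  apply ext'
  funext x
  rw [toFun_eq a x, mul_toFun, mk'_toFun, toFun_eq c]
  dsimp only
  rw [hj]
  congr 1
  rw [mul_assoc, mul_assoc, inv_mul_cancel, mul_one]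

end ActEnd

theorem lIdeal_subset {M : Type*} [Monoid M] {a c : M} (h : a ∈ lIdeal c) :
    lIdeal a ⊆ lIdeal c := by
  obtain ⟨m, rfl⟩ := h
  rintro x ⟨m', rfl⟩
  exact ⟨m' * m, by simp [mul_assoc]⟩

theorem rIdeal_subset {M : Type*} [Monoid M] {a c : M} (h : a ∈ rIdeal c) :
    rIdeal a ⊆ rIdeal c := by
  obtain ⟨m, rfl⟩ := h
  rintro x ⟨m', rfl⟩
  exact ⟨m * m', by simp [mul_assoc]⟩

theorem self_mem_lIdeal {M : Type*} [Monoid M] (a : M) : a ∈ lIdeal a := ⟨1, one_mul a⟩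
theorem self_mem_rIdeal {M : Type*} [Monoid M] (a : M) : a ∈ rIdeal a := ⟨1, mul_one a⟩

/-- In `End F_n(G)` (for `n ≥ 3`), two endomorphisms are `D`-related if and
only if they have the same rank. -/
theorem stmt2 {G : Type*} [Group G] {n : ℕ} (hn : 3 ≤ n) (a b : ActEnd G n) :
    (∃ c : ActEnd G n, lIdeal a = lIdeal c ∧ rIdeal c = rIdeal b) ↔
      ActEnd.rank a = ActEnd.rank b := by
  classical
  constructor
  · rintro ⟨c, hL, hR⟩
    have h1 : a ∈ lIdeal c := hL ▸ self_mem_lIdeal a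
    have h2 : c ∈ lIdeal a := hL ▸ self_mem_lIdeal c
    have h3 : c ∈ rIdeal b := hR ▸ self_mem_rIdeal c
    have h4 : b ∈ rIdeal c := hR ▸ self_mem_rIdeal b
    obtain ⟨m1, hm1⟩ := h1
    obtain ⟨m2, hm2⟩ := h2
    obtain ⟨m3, hm3⟩ := h3
    obtain ⟨m4, hm4⟩ := h4
    have e1 : a.rank = c.rank :=
      le_antisymm (hm1 ▸ ActEnd.rank_mul_le_left m1 c)
        (hm2 ▸ ActEnd.rank_mul_le_left m2 a)
    have e2 : c.rank = b.rank :=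
      le_antisymm (hm3 ▸ ActEnd.rank_mul_le_right b m3)
        (hm4 ▸ ActEnd.rank_mul_le_right c m4)
    exact e1.trans e2
  · intro hrank
    set sa := Finset.image a.idx Finset.univ with hsa
    set sb := Finset.image b.idx Finset.univ with hsb
    have hcard : sb.card = sa.card := by
      rw [ActEnd.rank_eq, ActEnd.rank_eq] at hrank
      exact hrank.symm
    set e : {x // x ∈ sb} ≃ {x // x ∈ sa} := Finset.equivOfCardEq hcard with he
    set τ : Fin n → Fin n := fun j => if h : j ∈ sb then (e ⟨j, h⟩ : Fin n) else j with hτ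
    set ρ : Fin n → Fin n := fun k => if h : k ∈ sa then (e.symm ⟨k, h⟩ : Fin n) else k
      with hρ
    have key1 : ∀ j ∈ sb, τ j ∈ sa := by
      intro j hj
      rw [hτ]; dsimp only; rw [dif_pos hj]
      exact (e ⟨j, hj⟩).2
    have key2 : ∀ j ∈ sb, ρ (τ j) = j := by
      intro j hj
      have h1 : τ j = (e ⟨j, hj⟩ : Fin n) := by rw [hτ]; dsimp only; rw [dif_pos hj]
      rw [h1, hρ]; dsimp only; rw [dif_pos (e ⟨j, hj⟩).2]
      rw [Subtype.coe_eta, Equiv.symm_apply_apply]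
    have key3 : ∀ k ∈ sa, ∃ j ∈ sb, τ j = k := by
      intro k hk
      refine ⟨(e.symm ⟨k, hk⟩ : Fin n), (e.symm ⟨k, hk⟩).2, ?_⟩
      rw [hτ]; dsimp only; rw [dif_pos (e.symm ⟨k, hk⟩).2]
      rw [Subtype.coe_eta, Equiv.apply_symm_apply]
    set c : ActEnd G n := ActEnd.mk' b.wt (fun i => τ (b.idx i)) with hc
    have hcidx : ∀ i, c.idx i = τ (b.idx i) := fun i => rfl
    refine ⟨c, ?_, ?_⟩
    · -- lIdeal a = lIdeal c
      have hac : ∃ m, a = m * c := by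
        apply ActEnd.exists_left_factor
        intro i
        have hai : a.idx i ∈ sa := by
          rw [hsa]; exact Finset.mem_image_of_mem _ (Finset.mem_univ i)
        obtain ⟨j, hj, hjk⟩ := key3 _ hai
        rw [hsb, Finset.mem_image] at hj
        obtain ⟨i0, _, rfl⟩ := hj
        exact ⟨i0, by rw [hcidx, hjk]⟩
      have hca : ∃ m, c = m * a := by
        apply ActEnd.exists_left_factor
        intro i
        have : τ (b.idx i) ∈ sa := key1 _ (by
          rw [hsb]; exact Finset.mem_image_of_mem _ (Finset.mem_univ i))
        rw [hsa, Finset.mem_image] at this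
        obtain ⟨j, _, hj⟩ := this
        exact ⟨j, by rw [hcidx, hj]⟩
      obtain ⟨m1, hm1⟩ := hac
      obtain ⟨m2, hm2⟩ := hca
      exact Set.Subset.antisymm (lIdeal_subset ⟨m1, hm1.symm⟩)
        (lIdeal_subset ⟨m2, hm2.symm⟩)
    · -- rIdeal c = rIdeal b
      have hcb : c = b * ActEnd.mk' (fun _ => (1 : G)) τ := by
        apply ActEnd.ext'
        funext x
        rw [hc, ActEnd.mul_toFun, ActEnd.toFun_eq b, ActEnd.mk'_toFun,
          ActEnd.mk'_toFun]
        simp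
      have hbc : b = c * ActEnd.mk' (fun _ => (1 : G)) ρ := by
        apply ActEnd.ext'
        funext x
        rw [hc, ActEnd.mul_toFun, ActEnd.mk'_toFun, ActEnd.mk'_toFun,
          ActEnd.toFun_eq b]
        dsimp only
        rw [mul_one, key2 _ (by
          rw [hsb]; exact Finset.mem_image_of_mem _ (Finset.mem_univ x.2))]
      exact Set.Subset.antisymm (rIdeal_subset ⟨_, hcb.symm⟩)
        (rIdeal_subset ⟨_, hbc.symm⟩)
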